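/- Let L be an n×n real symmetric matrix whose eigenvalues all lie in the interval [−4, 0] (i.e., L is negative semidefinite and L + 4I is positive semidefinite), let γ > 0, and let Z be an n×T real matrix. Then the supremum of dᵀ Z x over all d ∈ ℝⁿ, x ∈ ℝᵀ, and k ∈ ℝ subject to the constraints ‖d‖₂² + γ‖L d + k² d‖₂² ≤ 1 and ‖x‖₂² ≤ 1 equals the maximum over k̄ ∈ [0, 4] of the spectral norm ‖(I + γ(k̄ I + L)²)^{−1/2} Z‖₂. -/

import Mathlib

open Matrix Filter
open scoped Classical

/-- Euclidean norm of a vector. -/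
noncomputable def euclNorm {n : Type*} [Fintype n] (v : n → ℝ) : ℝ :=
  Real.sqrt (∑ i, v i ^ 2)

/-- Spectral norm (largest singular value) of a matrix: the supremum of
`‖M x‖₂` over the Euclidean unit ball. -/
noncomputable def specNorm {m n : Type*} [Fintype m] [Fintype n] (M : Matrix m n ℝ) : ℝ :=
  sSup {y | ∃ x : n → ℝ, euclNorm x ≤ 1 ∧ y = euclNorm (M.mulVec x)}

/-- The old `Matrix.PosSemidef.sqrt` (removed from Mathlib), with its old definition. -/
noncomputable def posSemidefSqrt {n : Type*} [Fintype n] [DecidableEq n]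
    {A : Matrix n n ℝ} (hA : A.PosSemidef) : Matrix n n ℝ :=
  (hA.1.eigenvectorUnitary : Matrix n n ℝ) *
    diagonal ((↑) ∘ (Real.sqrt ·) ∘ hA.1.eigenvalues) *
    (star hA.1.eigenvectorUnitary : Matrix n n ℝ)

/-- `A^{-1/2}`: the inverse of the positive semidefinite square root of `A`
(junk value `0` if `A` is not positive semidefinite). -/
noncomputable def invSqrt {n : Type*} [Fintype n] [DecidableEq n]
    (A : Matrix n n ℝ) : Matrix n n ℝ :=
  if h : A.PosSemidef then (posSemidefSqrt h)⁻¹ else 0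

lemma posSemidefSqrt_isHermitian {n : Type*} [Fintype n] [DecidableEq n]
    {A : Matrix n n ℝ} (hA : A.PosSemidef) : (posSemidefSqrt hA).IsHermitian := by
  unfold posSemidefSqrt
  rw [star_eq_conjTranspose]
  exact isHermitian_mul_mul_conjTranspose _ (isHermitian_diagonal _)

lemma posSemidefSqrt_mul_self {n : Type*} [Fintype n] [DecidableEq n]
    {A : Matrix n n ℝ} (hA : A.PosSemidef) : posSemidefSqrt hA * posSemidefSqrt hA = A := by
  have hU : star (hA.1.eigenvectorUnitary : Matrix n n ℝ) *
      (hA.1.eigenvectorUnitary : Matrix n n ℝ) = 1 :=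
    Unitary.star_mul_self_of_mem hA.1.eigenvectorUnitary.2
  unfold posSemidefSqrt
  conv_rhs => rw [hA.1.spectral_theorem]
  rw [Unitary.conjStarAlgAut_apply]
  simp only [Matrix.mul_assoc]
  rw [← Matrix.mul_assoc (star (hA.1.eigenvectorUnitary : Matrix n n ℝ)), hU, Matrix.one_mul, ← Matrix.mul_assoc (diagonal _) (diagonal _),
    diagonal_mul_diagonal]
  congr 3
  funext i
  simp [Real.mul_self_sqrt (hA.eigenvalues_nonneg i)]

/-- Squared Frobenius norm helper via entries, and Frobenius norm. -/
noncomputable def frobNorm {m n : Type*} [Fintype m] [Fintype n] (M : Matrix m n ℝ) : ℝ :=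
  Real.sqrt (∑ i, ∑ j, M i j ^ 2)

/-- Frobenius (trace) inner product. -/
noncomputable def frobInner {m n : Type*} [Fintype m] [Fintype n]
    (A B : Matrix m n ℝ) : ℝ :=
  ∑ i, ∑ j, A i j * B i j

set_option linter.unusedVariables false
set_option linter.unusedSectionVars false

section helpers
variable {n : Type*} [Fintype n] [DecidableEq n]

lemma isHermitian_transpose_eq {S : Matrix n n ℝ} (hS : S.IsHermitian) : Sᵀ = S := by
  ext i j
  have h := congrFun (congrFun hS.eq i) j
  simpa [conjTranspose_apply] using h

/-- move a real symmetric matrix across a dot product -/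
lemma symm_move {S : Matrix n n ℝ} (hS : S.IsHermitian) (u y : n → ℝ) :
    u ⬝ᵥ S *ᵥ y = (S *ᵥ u) ⬝ᵥ y := by
  rw [dotProduct_mulVec, ← vecMul_transpose, isHermitian_transpose_eq hS]

lemma dot_cs (u w : n → ℝ) : (u ⬝ᵥ w) ^ 2 ≤ (u ⬝ᵥ u) * (w ⬝ᵥ w) := by
  simpa [dotProduct, sq] using
    Finset.sum_mul_sq_le_sq_mul_sq Finset.univ u w

/-- Cauchy-Schwarz for a PSD quadratic form -/
lemma psd_cs {A : Matrix n n ℝ} (hA : A.PosSemidef) (u w : n → ℝ) :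
    (u ⬝ᵥ A *ᵥ w) ^ 2 ≤ (u ⬝ᵥ A *ᵥ u) * (w ⬝ᵥ A *ᵥ w) := by
  obtain ⟨S, hSsym, hSS⟩ : ∃ S : Matrix n n ℝ, S.IsHermitian ∧ S * S = A :=
    ⟨posSemidefSqrt hA, posSemidefSqrt_isHermitian hA, posSemidefSqrt_mul_self hA⟩
  have hfac : ∀ a b : n → ℝ, a ⬝ᵥ A *ᵥ b = (S *ᵥ a) ⬝ᵥ (S *ᵥ b) := by
    intro a b
    rw [← hSS, ← mulVec_mulVec, symm_move hSsym]
  rw [hfac u w, hfac u u, hfac w w]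
  exact dot_cs _ _

lemma posSemidef_dot_nonneg {A : Matrix n n ℝ} (hA : A.PosSemidef) (x : n → ℝ) :
    0 ≤ x ⬝ᵥ A *ᵥ x := by simpa using hA.dotProduct_mulVec_nonneg x

/-- Loewner order inversion, quadratic form version. -/
lemma inv_quad_mono {A B : Matrix n n ℝ} (hA : A.PosDef) (hB : B.PosDef)
    (hAB : (B - A).PosSemidef) (v : n → ℝ) :
    v ⬝ᵥ B⁻¹ *ᵥ v ≤ v ⬝ᵥ A⁻¹ *ᵥ v := by
  set y := B⁻¹ *ᵥ v with hy
  set t := v ⬝ᵥ B⁻¹ *ᵥ v with ht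
  have hBy : B *ᵥ y = v := by
    rw [hy, mulVec_mulVec, Matrix.mul_nonsing_inv _ hB.det_pos.ne'.isUnit, one_mulVec]
  have hAv : A *ᵥ (A⁻¹ *ᵥ v) = v := by
    rw [mulVec_mulVec, Matrix.mul_nonsing_inv _ hA.det_pos.ne'.isUnit, one_mulVec]
  have ht0 : 0 ≤ t := posSemidef_dot_nonneg hB.inv.posSemidef v
  have hyv : y ⬝ᵥ v = t := by rw [ht, dotProduct_comm]
  have hyAy : y ⬝ᵥ A *ᵥ y ≤ t := by
    have := posSemidef_dot_nonneg hAB y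
    rw [sub_mulVec, dotProduct_sub, sub_nonneg] at this
    calc y ⬝ᵥ A *ᵥ y ≤ y ⬝ᵥ B *ᵥ y := this
      _ = t := by rw [hBy, hyv]
  have hs0 : 0 ≤ v ⬝ᵥ A⁻¹ *ᵥ v := posSemidef_dot_nonneg hA.inv.posSemidef v
  have hCS : t ^ 2 ≤ t * (v ⬝ᵥ A⁻¹ *ᵥ v) := by
    have h1 : y ⬝ᵥ A *ᵥ (A⁻¹ *ᵥ v) = t := by rw [hAv, hyv]
    have h2 : (A⁻¹ *ᵥ v) ⬝ᵥ A *ᵥ (A⁻¹ *ᵥ v) = v ⬝ᵥ A⁻¹ *ᵥ v := by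
      rw [hAv, dotProduct_comm]
    calc t ^ 2 = (y ⬝ᵥ A *ᵥ (A⁻¹ *ᵥ v)) ^ 2 := by rw [h1]
      _ ≤ (y ⬝ᵥ A *ᵥ y) * ((A⁻¹ *ᵥ v) ⬝ᵥ A *ᵥ (A⁻¹ *ᵥ v)) := psd_cs hA.posSemidef _ _
      _ ≤ t * (v ⬝ᵥ A⁻¹ *ᵥ v) := by
          rw [h2]; exact mul_le_mul_of_nonneg_right hyAy hs0
  rcases eq_or_lt_of_le ht0 with h | h
  · rw [← h]; exact hs0
  · nlinarith [hCS]

end helpers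

section part2
variable {n : Type*} [Fintype n] [DecidableEq n]

noncomputable def invSqrt' (A : Matrix n n ℝ) : Matrix n n ℝ :=
  if h : A.PosSemidef then (posSemidefSqrt h)⁻¹ else 0

lemma dot_self_eq_sum_sq (v : n → ℝ) : v ⬝ᵥ v = ∑ i, v i ^ 2 := by
  simp [dotProduct, sq]

lemma dot_self_nonneg (v : n → ℝ) : 0 ≤ v ⬝ᵥ v := by
  rw [dot_self_eq_sum_sq]; positivity

lemma dot_self_pos {d : n → ℝ} (hd : d ≠ 0) : 0 < d ⬝ᵥ d := by
  rcases (Function.ne_iff).mp hd with ⟨i, hi⟩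
  rw [dot_self_eq_sum_sq]
  exact Finset.sum_pos' (fun j _ => sq_nonneg _)
    ⟨i, Finset.mem_univ i, by
      have : d i ≠ 0 := by simpa using hi
      positivity⟩

variable {A : Matrix n n ℝ} (hA : A.PosDef)

lemma sqrt_det_ne (hA : A.PosDef) : (posSemidefSqrt hA.posSemidef).det ≠ 0 := by
  intro h
  have h2 : (posSemidefSqrt hA.posSemidef * posSemidefSqrt hA.posSemidef).det = 0 := by
    rw [det_mul, h, mul_zero]
  rw [posSemidefSqrt_mul_self hA.posSemidef] at h2
  exact hA.det_pos.ne' h2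

lemma invSqrt'_herm (hA : A.PosDef) : (invSqrt' A).IsHermitian := by
  rw [invSqrt', dif_pos hA.posSemidef]
  exact (posSemidefSqrt_isHermitian hA.posSemidef).inv

lemma invSqrt'_mul_self (hA : A.PosDef) : invSqrt' A * invSqrt' A = A⁻¹ := by
  rw [invSqrt', dif_pos hA.posSemidef, ← Matrix.mul_inv_rev,
    posSemidefSqrt_mul_self hA.posSemidef]

lemma invSqrt'_quad (hA : A.PosDef) (w : n → ℝ) :
    (invSqrt' A *ᵥ w) ⬝ᵥ (invSqrt' A *ᵥ w) = w ⬝ᵥ A⁻¹ *ᵥ w := by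
  rw [← symm_move (invSqrt'_herm hA), mulVec_mulVec, invSqrt'_mul_self hA]

/-- factorization of a dot product through sqrt and invSqrt -/
lemma dot_factor (hA : A.PosDef) (d v : n → ℝ) :
    d ⬝ᵥ v = (posSemidefSqrt hA.posSemidef *ᵥ d) ⬝ᵥ (invSqrt' A *ᵥ v) := by
  rw [← symm_move (posSemidefSqrt_isHermitian hA.posSemidef), mulVec_mulVec,
    invSqrt', dif_pos hA.posSemidef,
    Matrix.mul_nonsing_inv _ (sqrt_det_ne hA).isUnit, one_mulVec]

lemma sqrt_quad (hA : A.PosDef) (d : n → ℝ) :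
    (posSemidefSqrt hA.posSemidef *ᵥ d) ⬝ᵥ (posSemidefSqrt hA.posSemidef *ᵥ d) = d ⬝ᵥ A *ᵥ d := by
  rw [← symm_move (posSemidefSqrt_isHermitian hA.posSemidef), mulVec_mulVec,
    posSemidefSqrt_mul_self hA.posSemidef]

end part2

section part3
variable {n : Type*} [Fintype n] [DecidableEq n]
variable (L : Matrix n n ℝ) (γ : ℝ)

noncomputable def Amat (c : ℝ) : Matrix n n ℝ :=
  1 + γ • (c • (1 : Matrix n n ℝ) + L) ^ 2

variable {L}

lemma hermL (hSymm : L.IsSymm) : L.IsHermitian := by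
  show Lᴴ = L
  ext i j
  rw [conjTranspose_apply, star_trivial]
  exact congrFun (congrFun hSymm i) j

lemma hermB (hSymm : L.IsSymm) (c : ℝ) :
    (c • (1 : Matrix n n ℝ) + L).IsHermitian := by
  have h1 : (c • (1 : Matrix n n ℝ)).IsHermitian := by
    show _ᴴ = _
    ext i j
    simp [conjTranspose_apply, one_apply, eq_comm]
  exact h1.add (hermL hSymm)

lemma hermAmat (hSymm : L.IsSymm) (c : ℝ) : (Amat L γ c).IsHermitian := by
  show _ᴴ = _
  rw [Amat, conjTranspose_add, conjTranspose_smul, conjTranspose_one,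
    ((hermB hSymm c).pow 2).eq, star_trivial]

lemma mulVecB (c : ℝ) (d : n → ℝ) :
    (c • (1 : Matrix n n ℝ) + L) *ᵥ d = c • d + L *ᵥ d := by
  rw [add_mulVec, smul_mulVec, one_mulVec]

lemma quadAmat (hSymm : L.IsSymm) (c : ℝ) (d : n → ℝ) :
    d ⬝ᵥ (Amat L γ c) *ᵥ d
      = d ⬝ᵥ d + γ * (((c • (1 : Matrix n n ℝ) + L) *ᵥ d) ⬝ᵥ
          ((c • (1 : Matrix n n ℝ) + L) *ᵥ d)) := by
  set B := c • (1 : Matrix n n ℝ) + L with hB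
  have h1 : (Amat L γ c) *ᵥ d = d + γ • (B *ᵥ (B *ᵥ d)) := by
    rw [Amat, add_mulVec, one_mulVec, smul_mulVec, pow_two, ← mulVec_mulVec]
  rw [h1, dotProduct_add, dotProduct_smul, symm_move (hermB hSymm c)]
  rfl

lemma posdefAmat (hSymm : L.IsSymm) (hγ : 0 < γ) (c : ℝ) : (Amat L γ c).PosDef := by
  refine Matrix.PosDef.of_dotProduct_mulVec_pos (hermAmat γ hSymm c) fun x hx => ?_
  have h := quadAmat γ hSymm c x
  have h1 : 0 < x ⬝ᵥ x := dot_self_pos hx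
  have h2 : 0 ≤ ((c • (1 : Matrix n n ℝ) + L) *ᵥ x) ⬝ᵥ
      ((c • (1 : Matrix n n ℝ) + L) *ᵥ x) := dot_self_nonneg _
  show 0 < x ⬝ᵥ (Amat L γ c) *ᵥ x
  rw [h]
  nlinarith

/-- `Amat c - 1` is PSD for `γ ≥ 0` -/
lemma quad_ge_one (hSymm : L.IsSymm) (hγ : 0 < γ) (c : ℝ) (x : n → ℝ) :
    x ⬝ᵥ x ≤ x ⬝ᵥ (Amat L γ c) *ᵥ x := by
  have h := quadAmat γ hSymm c x
  have h2 : 0 ≤ ((c • (1 : Matrix n n ℝ) + L) *ᵥ x) ⬝ᵥ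
      ((c • (1 : Matrix n n ℝ) + L) *ᵥ x) := dot_self_nonneg _
  nlinarith

lemma expandQuad (c : ℝ) (x : n → ℝ) :
    ((c • (1 : Matrix n n ℝ) + L) *ᵥ x) ⬝ᵥ ((c • (1 : Matrix n n ℝ) + L) *ᵥ x)
      = c ^ 2 * (x ⬝ᵥ x) + 2 * c * (x ⬝ᵥ L *ᵥ x) + (L *ᵥ x) ⬝ᵥ (L *ᵥ x) := by
  rw [mulVecB, dotProduct_add, add_dotProduct, add_dotProduct,
    smul_dotProduct, smul_dotProduct, dotProduct_smul, dotProduct_smul,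
    dotProduct_comm (L *ᵥ x) x]
  simp only [smul_eq_mul]
  ring

lemma Amat_mono (hSymm : L.IsSymm)
    (hShift : (L + (4 : ℝ) • (1 : Matrix n n ℝ)).PosSemidef)
    (hγ : 0 < γ) {c : ℝ} (hc : 4 ≤ c) :
    ((Amat L γ c) - (Amat L γ 4)).PosSemidef := by
  refine Matrix.PosSemidef.of_dotProduct_mulVec_nonneg ?_ ?_
  · exact (hermAmat γ hSymm c).sub (hermAmat γ hSymm 4)
  · intro x
    have hL4 : 0 ≤ x ⬝ᵥ L *ᵥ x + 4 * (x ⬝ᵥ x) := by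
      have := posSemidef_dot_nonneg hShift x
      rwa [add_mulVec, dotProduct_add, smul_mulVec, one_mulVec,
        dotProduct_smul, smul_eq_mul] at this
    have hx : 0 ≤ x ⬝ᵥ x := dot_self_nonneg x
    have hq : ∀ e : ℝ, x ⬝ᵥ (Amat L γ e) *ᵥ x
        = x ⬝ᵥ x + γ * (e ^ 2 * (x ⬝ᵥ x) + 2 * e * (x ⬝ᵥ L *ᵥ x)
            + (L *ᵥ x) ⬝ᵥ (L *ᵥ x)) := fun e => by
      rw [quadAmat γ hSymm e x, expandQuad]
    show 0 ≤ x ⬝ᵥ (Amat L γ c - Amat L γ 4) *ᵥ x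
    rw [sub_mulVec, dotProduct_sub, hq c, hq 4]
    ring_nf
    nlinarith [mul_nonneg (mul_nonneg hγ.le (by linarith : (0:ℝ) ≤ c - 4)) hL4,
      mul_nonneg (mul_nonneg hγ.le (sq_nonneg (c - 4))) hx]

end part3

section part4
variable {n m : Type*} [Fintype n] [Fintype m] [DecidableEq n]

lemma invSqrt_eq' (A : Matrix n n ℝ) : invSqrt A = invSqrt' A := rfl

lemma invSqrt_quad {A : Matrix n n ℝ} (hA : A.PosDef) (w : n → ℝ) :
    (invSqrt A *ᵥ w) ⬝ᵥ (invSqrt A *ᵥ w) = w ⬝ᵥ A⁻¹ *ᵥ w := by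
  rw [invSqrt_eq']; exact invSqrt'_quad hA w

lemma euclNorm_eq_sqrt_dot (v : n → ℝ) : euclNorm v = Real.sqrt (v ⬝ᵥ v) := by
  rw [euclNorm, dot_self_eq_sum_sq]

lemma euclNorm_nonneg (v : n → ℝ) : 0 ≤ euclNorm v := Real.sqrt_nonneg _

lemma euclNorm_sq (v : n → ℝ) : euclNorm v ^ 2 = v ⬝ᵥ v := by
  rw [euclNorm_eq_sqrt_dot, Real.sq_sqrt (dot_self_nonneg v)]

lemma euclNorm_le_one_iff (v : n → ℝ) : euclNorm v ≤ 1 ↔ ∑ i, v i ^ 2 ≤ 1 := by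
  rw [euclNorm]
  constructor
  · intro h
    have h0 : (0:ℝ) ≤ ∑ i, v i ^ 2 := by positivity
    nlinarith [Real.sq_sqrt h0, Real.sqrt_nonneg (∑ i, v i ^ 2)]
  · intro h
    calc Real.sqrt (∑ i, v i ^ 2) ≤ Real.sqrt 1 := Real.sqrt_le_sqrt h
      _ = 1 := Real.sqrt_one

lemma mulVec_dot_le (M : Matrix m n ℝ) (x : n → ℝ) :
    (M *ᵥ x) ⬝ᵥ (M *ᵥ x) ≤ (∑ i, ∑ j, M i j ^ 2) * (x ⬝ᵥ x) := by
  rw [dot_self_eq_sum_sq, dot_self_eq_sum_sq (v := x), Finset.sum_mul]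
  apply Finset.sum_le_sum
  intro i _
  simpa [mulVec, dotProduct] using
    Finset.sum_mul_sq_le_sq_mul_sq Finset.univ (fun j => M i j) x

lemma specset_nonempty (M : Matrix m n ℝ) :
    Set.Nonempty {y | ∃ x : n → ℝ, euclNorm x ≤ 1 ∧ y = euclNorm (M.mulVec x)} :=
  ⟨euclNorm (M.mulVec 0), 0, by simp [euclNorm], rfl⟩

lemma specset_bddAbove (M : Matrix m n ℝ) :
    BddAbove {y | ∃ x : n → ℝ, euclNorm x ≤ 1 ∧ y = euclNorm (M.mulVec x)} := by
  refine ⟨Real.sqrt (∑ i, ∑ j, M i j ^ 2), fun y hy => ?_⟩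
  obtain ⟨x, hx, rfl⟩ := hy
  rw [euclNorm_eq_sqrt_dot]
  apply Real.sqrt_le_sqrt
  calc (M *ᵥ x) ⬝ᵥ (M *ᵥ x) ≤ (∑ i, ∑ j, M i j ^ 2) * (x ⬝ᵥ x) := mulVec_dot_le M x
    _ ≤ (∑ i, ∑ j, M i j ^ 2) * 1 := by
        apply mul_le_mul_of_nonneg_left _ (by positivity)
        rw [dot_self_eq_sum_sq]
        exact (euclNorm_le_one_iff x).mp hx
    _ = _ := mul_one _

lemma le_specNorm (M : Matrix m n ℝ) {x : n → ℝ} (hx : euclNorm x ≤ 1) :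
    euclNorm (M.mulVec x) ≤ specNorm M :=
  le_csSup (specset_bddAbove M) ⟨x, hx, rfl⟩

lemma specNorm_le (M : Matrix m n ℝ) {K : ℝ}
    (h : ∀ x : n → ℝ, euclNorm x ≤ 1 → euclNorm (M.mulVec x) ≤ K) :
    specNorm M ≤ K :=
  csSup_le (specset_nonempty M) (by rintro y ⟨x, hx, rfl⟩; exact h x hx)

end part4


/-- The polar problem equals a line search over `k̄ ∈ [0,4]` of the
spectral norm of `A(k̄)^{-1/2} Z`, where `A(k̄) = I + γ(k̄ I + L)²`. -/
theorem stmt0 {n T : ℕ} (L : Matrix (Fin n) (Fin n) ℝ) (hSymm : L.IsSymm)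
    (hNeg : (-L).PosSemidef)
    (hShift : (L + (4 : ℝ) • (1 : Matrix (Fin n) (Fin n) ℝ)).PosSemidef)
    (γ : ℝ) (hγ : 0 < γ) (Z : Matrix (Fin n) (Fin T) ℝ) :
    sSup {y | ∃ (d : Fin n → ℝ) (x : Fin T → ℝ) (k : ℝ),
        (∑ i, d i ^ 2) + γ * (∑ i, (L.mulVec d i + k ^ 2 * d i) ^ 2) ≤ 1 ∧
        (∑ j, x j ^ 2) ≤ 1 ∧ y = d ⬝ᵥ Z.mulVec x} =
    sSup {y | ∃ k ∈ Set.Icc (0 : ℝ) 4,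
        y = specNorm (invSqrt ((1 : Matrix (Fin n) (Fin n) ℝ)
              + γ • (k • (1 : Matrix (Fin n) (Fin n) ℝ) + L) ^ 2) * Z)} := by

  have hpd : ∀ c : ℝ, (Amat L γ c).PosDef := fun c => posdefAmat γ hSymm hγ c
  have hAmat : ∀ c : ℝ, (1 : Matrix (Fin n) (Fin n) ℝ)
      + γ • (c • (1 : Matrix (Fin n) (Fin n) ℝ) + L) ^ 2 = Amat L γ c := fun _ => rfl
  simp only [hAmat]
  set K := Real.sqrt (∑ i, ∑ j, Z i j ^ 2) with hK
  have hSnn : (0:ℝ) ≤ ∑ i, ∑ j, Z i j ^ 2 := by positivity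
  have hKsq : K ^ 2 = ∑ i, ∑ j, Z i j ^ 2 := Real.sq_sqrt hSnn
  have hK0 : 0 ≤ K := Real.sqrt_nonneg _
  -- constraint as quadratic form
  have hconstr : ∀ (d : Fin n → ℝ) (c : ℝ),
      d ⬝ᵥ (Amat L γ c) *ᵥ d
        = (∑ i, d i ^ 2) + γ * (∑ i, (L.mulVec d i + c * d i) ^ 2) := by
    intro d c
    rw [quadAmat γ hSymm c d, dot_self_eq_sum_sq, dot_self_eq_sum_sq, mulVecB]
    congr 2
    apply Finset.sum_congr rfl
    intro i _
    simp only [Pi.add_apply, Pi.smul_apply, smul_eq_mul]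
    ring
  -- A(c)⁻¹ ⪯ 1
  have hinv_le_dot : ∀ (c : ℝ) (v : Fin n → ℝ),
      v ⬝ᵥ (Amat L γ c)⁻¹ *ᵥ v ≤ v ⬝ᵥ v := by
    intro c v
    have hsub : ((Amat L γ c) - 1).PosSemidef := by
      refine Matrix.PosSemidef.of_dotProduct_mulVec_nonneg ((hermAmat γ hSymm c).sub Matrix.isHermitian_one) fun x => ?_
      have h1 := quad_ge_one γ hSymm hγ c x
      simp only [star_trivial]
      rw [sub_mulVec, dotProduct_sub, one_mulVec]
      linarith
    have h := inv_quad_mono Matrix.PosDef.one (hpd c) hsub v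
    rwa [inv_one, one_mulVec] at h
  -- euclNorm of the transformed vector
  have hsqrt : ∀ (c : ℝ) (x : Fin T → ℝ),
      euclNorm ((invSqrt (Amat L γ c) * Z).mulVec x)
        = Real.sqrt ((Z *ᵥ x) ⬝ᵥ (Amat L γ c)⁻¹ *ᵥ (Z *ᵥ x)) := by
    intro c x
    rw [euclNorm_eq_sqrt_dot]
    show Real.sqrt ((invSqrt (Amat L γ c) * Z) *ᵥ x ⬝ᵥ _) = _
    rw [← mulVec_mulVec, invSqrt_quad (hpd c)]
  -- uniform bound K
  have hKbound : ∀ (c : ℝ) (x : Fin T → ℝ), euclNorm x ≤ 1 →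
      euclNorm ((invSqrt (Amat L γ c) * Z).mulVec x) ≤ K := by
    intro c x hx
    rw [hsqrt c x, hK]
    apply Real.sqrt_le_sqrt
    have h2 := hinv_le_dot c (Z *ᵥ x)
    have h3 := mulVec_dot_le Z x
    have h4 : x ⬝ᵥ x ≤ 1 := by
      rw [dot_self_eq_sum_sq]; exact (euclNorm_le_one_iff x).mp hx
    nlinarith
  have hRHS_bdd : BddAbove {y | ∃ k ∈ Set.Icc (0 : ℝ) 4,
      y = specNorm (invSqrt (Amat L γ k) * Z)} := by
    refine ⟨K, ?_⟩
    rintro y ⟨c, hc, rfl⟩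
    exact specNorm_le _ (fun x hx => hKbound c x hx)
  have hRHS_ne : Set.Nonempty {y | ∃ k ∈ Set.Icc (0 : ℝ) 4,
      y = specNorm (invSqrt (Amat L γ k) * Z)} :=
    ⟨_, 0, ⟨le_refl 0, by norm_num⟩, rfl⟩
  have hLHS_ne : Set.Nonempty {y | ∃ (d : Fin n → ℝ) (x : Fin T → ℝ) (k : ℝ),
      (∑ i, d i ^ 2) + γ * (∑ i, (L.mulVec d i + k ^ 2 * d i) ^ 2) ≤ 1 ∧
      (∑ j, x j ^ 2) ≤ 1 ∧ y = d ⬝ᵥ Z.mulVec x} := by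
    refine ⟨0, 0, 0, 0, ?_, by simp, by simp⟩
    simp [mulVec_zero]
  have hLHS_bdd : BddAbove {y | ∃ (d : Fin n → ℝ) (x : Fin T → ℝ) (k : ℝ),
      (∑ i, d i ^ 2) + γ * (∑ i, (L.mulVec d i + k ^ 2 * d i) ^ 2) ≤ 1 ∧
      (∑ j, x j ^ 2) ≤ 1 ∧ y = d ⬝ᵥ Z.mulVec x} := by
    refine ⟨K, ?_⟩
    rintro y ⟨d, x, k, h1, h2, rfl⟩
    have hd : d ⬝ᵥ d ≤ 1 := by
      rw [dot_self_eq_sum_sq]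
      have hnn : 0 ≤ γ * ∑ i, (L.mulVec d i + k ^ 2 * d i) ^ 2 := by positivity
      linarith
    have hcs := dot_cs d (Z *ᵥ x)
    have h3 := mulVec_dot_le Z x
    have hx1 : x ⬝ᵥ x ≤ 1 := by rw [dot_self_eq_sum_sq]; exact h2
    have hd0 := dot_self_nonneg d
    have hv0 := dot_self_nonneg (Z *ᵥ x)
    show d ⬝ᵥ Z *ᵥ x ≤ K
    nlinarith [sq_nonneg (d ⬝ᵥ Z *ᵥ x - K), sq_nonneg (d ⬝ᵥ Z *ᵥ x + K)]
  apply le_antisymm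
  · -- LHS ≤ RHS
    apply csSup_le hLHS_ne
    rintro y ⟨d, x, k, h1, h2, rfl⟩
    set c := min (k ^ 2) 4 with hcdef
    have hc04 : c ∈ Set.Icc (0:ℝ) 4 := ⟨le_min (sq_nonneg k) (by norm_num), min_le_right _ _⟩
    refine le_trans ?_ (le_csSup hRHS_bdd ⟨c, hc04, rfl⟩)
    -- y ≤ specNorm (invSqrt (Amat c) * Z)
    have hquad : d ⬝ᵥ (Amat L γ (k ^ 2)) *ᵥ d ≤ 1 := by rw [hconstr]; exact h1
    have hq0 : 0 ≤ d ⬝ᵥ (Amat L γ (k ^ 2)) *ᵥ d :=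
      posSemidef_dot_nonneg (hpd (k ^ 2)).posSemidef d
    have hfac : d ⬝ᵥ (Z *ᵥ x)
        = (posSemidefSqrt (hpd (k ^ 2)).posSemidef *ᵥ d) ⬝ᵥ (invSqrt' (Amat L γ (k ^ 2)) *ᵥ (Z *ᵥ x)) :=
      dot_factor (hpd (k ^ 2)) d (Z *ᵥ x)
    have hcs := dot_cs (posSemidefSqrt (hpd (k ^ 2)).posSemidef *ᵥ d)
      (invSqrt' (Amat L γ (k ^ 2)) *ᵥ (Z *ᵥ x))
    rw [sqrt_quad (hpd (k ^ 2)), invSqrt'_quad (hpd (k ^ 2)), ← hfac] at hcs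
    have hr0 : 0 ≤ (Z *ᵥ x) ⬝ᵥ (Amat L γ (k ^ 2))⁻¹ *ᵥ (Z *ᵥ x) :=
      posSemidef_dot_nonneg (hpd (k ^ 2)).inv.posSemidef _
    have hmono : (Z *ᵥ x) ⬝ᵥ (Amat L γ (k ^ 2))⁻¹ *ᵥ (Z *ᵥ x)
        ≤ (Z *ᵥ x) ⬝ᵥ (Amat L γ c)⁻¹ *ᵥ (Z *ᵥ x) := by
      rcases le_or_gt (k ^ 2) 4 with h | h
      · rw [hcdef, min_eq_left h]
      · rw [hcdef, min_eq_right h.le]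
        exact inv_quad_mono (hpd 4) (hpd (k ^ 2)) (Amat_mono γ hSymm hShift hγ h.le) _
    have hy2 : (d ⬝ᵥ Z *ᵥ x) ^ 2 ≤ (Z *ᵥ x) ⬝ᵥ (Amat L γ c)⁻¹ *ᵥ (Z *ᵥ x) := by
      nlinarith
    calc d ⬝ᵥ Z *ᵥ x ≤ |d ⬝ᵥ Z *ᵥ x| := le_abs_self _
      _ = Real.sqrt ((d ⬝ᵥ Z *ᵥ x) ^ 2) := (Real.sqrt_sq_eq_abs _).symm
      _ ≤ Real.sqrt ((Z *ᵥ x) ⬝ᵥ (Amat L γ c)⁻¹ *ᵥ (Z *ᵥ x)) := Real.sqrt_le_sqrt hy2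
      _ = euclNorm ((invSqrt (Amat L γ c) * Z).mulVec x) := (hsqrt c x).symm
      _ ≤ specNorm (invSqrt (Amat L γ c) * Z) :=
          le_specNorm _ ((euclNorm_le_one_iff x).mpr h2)
  · -- RHS ≤ LHS
    apply csSup_le hRHS_ne
    rintro y ⟨c, hc, rfl⟩
    apply specNorm_le
    intro x hx
    set e := euclNorm ((invSqrt (Amat L γ c) * Z).mulVec x) with hedef
    have he0 : 0 ≤ e := euclNorm_nonneg _
    have hr0 : 0 ≤ (Z *ᵥ x) ⬝ᵥ (Amat L γ c)⁻¹ *ᵥ (Z *ᵥ x) :=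
      posSemidef_dot_nonneg (hpd c).inv.posSemidef _
    have he2 : e ^ 2 = (Z *ᵥ x) ⬝ᵥ (Amat L γ c)⁻¹ *ᵥ (Z *ᵥ x) := by
      rw [hedef, hsqrt c x, Real.sq_sqrt hr0]
    rcases eq_or_lt_of_le he0 with h0 | h0
    · -- e = 0 : bound by membership of 0 in the LHS set
      rw [← h0]
      exact le_csSup hLHS_bdd ⟨0, 0, 0, by simp [mulVec_zero], by simp, by simp⟩
    · -- e > 0 : construct feasible d
      set w := (Amat L γ c)⁻¹ *ᵥ (Z *ᵥ x) with hwdef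
      have hAw : (Amat L γ c) *ᵥ w = Z *ᵥ x := by
        rw [hwdef, mulVec_mulVec, Matrix.mul_nonsing_inv _ (hpd c).det_pos.ne'.isUnit,
          one_mulVec]
      have hwv : w ⬝ᵥ (Z *ᵥ x) = e ^ 2 := by
        rw [hwdef, he2, dotProduct_comm]
      set d := e⁻¹ • w with hddef
      have hk2 : (Real.sqrt c) ^ 2 = c := Real.sq_sqrt hc.1
      have hfeas : (∑ i, d i ^ 2)
          + γ * (∑ i, (L.mulVec d i + (Real.sqrt c) ^ 2 * d i) ^ 2) ≤ 1 := by
        rw [hk2, ← hconstr d c]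
        have : d ⬝ᵥ (Amat L γ c) *ᵥ d = e⁻¹ * (e⁻¹ * (w ⬝ᵥ (Amat L γ c) *ᵥ w)) := by
          rw [hddef, smul_dotProduct, mulVec_smul, dotProduct_smul]
          simp [smul_eq_mul]
        rw [this, hAw, hwv]
        rw [show e⁻¹ * (e⁻¹ * e ^ 2) = 1 by field_simp]
      have hval : d ⬝ᵥ Z.mulVec x = e := by
        rw [hddef, smul_dotProduct, smul_eq_mul]
        show e⁻¹ * (w ⬝ᵥ (Z *ᵥ x)) = e
        rw [hwv]
        field_simp
      exact le_csSup hLHS_bdd ⟨d, x, Real.sqrt c, hfeas, (euclNorm_le_one_iff x).mp hx, hval.symm⟩
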